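/- Let 𝒢 : (0, c₀) → ℝ be positive and C¹ with lim_{ρ→0⁺} 𝒢(ρ) = +∞ and lim_{ρ→0⁺} ρ log(1/ρ)(-𝒢'(ρ))/𝒢(ρ) = γ for some finite γ ≥ 0. Then lim_{ρ→0⁺} (∫₀^ρ 𝒢(s) ds)/(ρ 𝒢(ρ)) = 1. -/

import Mathlib

open Set Filter Topology MeasureTheory intervalIntegral

/-- `(∫₀^ρ 𝒢(s) ds)/(ρ 𝒢(ρ)) → 1` as `ρ → 0⁺`. -/
theorem stmt14 (𝒢 𝒢' : ℝ → ℝ) (c₀ γ : ℝ) (hc₀ : 0 < c₀) (hγ : 0 ≤ γ)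
    (hderiv : ∀ ρ ∈ Set.Ioo (0:ℝ) c₀, HasDerivAt 𝒢 (𝒢' ρ) ρ)
    (hcont : ContinuousOn 𝒢' (Set.Ioo 0 c₀))
    (hpos : ∀ ρ ∈ Set.Ioo (0:ℝ) c₀, 0 < 𝒢 ρ)
    (hinf : Tendsto 𝒢 (𝓝[>] 0) atTop)
    (hlim : Tendsto (fun ρ => ρ * Real.log (1 / ρ) * (-𝒢' ρ) / 𝒢 ρ) (𝓝[>] 0) (𝓝 γ)) :
    Tendsto (fun ρ => (∫ s in (0:ℝ)..ρ, 𝒢 s) / (ρ * 𝒢 ρ)) (𝓝[>] 0) (𝓝 1) := by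
  -- basic eventual membership
  have hminpos : (0:ℝ) < min c₀ (1/2) := lt_min hc₀ (by norm_num)
  have hmem : ∀ᶠ x in 𝓝[>] (0:ℝ), x ∈ Ioo (0:ℝ) (min c₀ (1/2)) :=
    Ioo_mem_nhdsGT_of_mem ⟨le_refl 0, hminpos⟩
  -- Step A : x * 𝒢' x / 𝒢 x → 0
  have hlogtop : Tendsto (fun x : ℝ => Real.log (1/x)) (𝓝[>] 0) atTop := by
    have h : Tendsto (fun x : ℝ => x⁻¹) (𝓝[>] (0:ℝ)) atTop := tendsto_inv_nhdsGT_zero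
    exact (Real.tendsto_log_atTop.comp h).congr fun x => by
      simp [Function.comp, one_div]
  have hloginv : Tendsto (fun x : ℝ => (Real.log (1/x))⁻¹) (𝓝[>] (0:ℝ)) (𝓝 0) :=
    hlogtop.inv_tendsto_atTop
  have ht0 : Tendsto (fun x => x * 𝒢' x / 𝒢 x) (𝓝[>] (0:ℝ)) (𝓝 0) := by
    have h1 : Tendsto (fun x => -(x * Real.log (1/x) * (-𝒢' x) / 𝒢 x * (Real.log (1/x))⁻¹))
        (𝓝[>] (0:ℝ)) (𝓝 (-(γ * 0))) := (hlim.mul hloginv).neg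
    rw [mul_zero, neg_zero] at h1
    apply h1.congr'
    filter_upwards [hmem] with x hx
    have hx1 : x < 1 := lt_of_lt_of_le hx.2 (le_trans (min_le_right _ _) (by norm_num))
    have hxc : x ∈ Ioo (0:ℝ) c₀ := ⟨hx.1, lt_of_lt_of_le hx.2 (min_le_left _ _)⟩
    have hG : 𝒢 x ≠ 0 := (hpos x hxc).ne'
    have hL : Real.log (1/x) ≠ 0 := by
      rw [one_div, Real.log_inv]
      exact neg_ne_zero.2 (Real.log_neg hx.1 hx1).ne
    field_simp
  -- Step B/C : extract δ₁
  have hE1 : ∀ᶠ x in 𝓝[>] (0:ℝ),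
      x ∈ Ioo (0:ℝ) (min c₀ (1/2)) ∧ x * Real.log (1/x) * (-𝒢' x) / 𝒢 x ≤ γ + 1 :=
    hmem.and ((hlim.eventually_lt_const (lt_add_one γ)).mono fun x hx => hx.le)
  obtain ⟨δ₁, hδ₁pos, hδ₁sub⟩ := mem_nhdsGT_iff_exists_Ioo_subset.1 hE1
  rw [mem_Ioi] at hδ₁pos
  -- φ and its derivative
  set φ : ℝ → ℝ := fun x => Real.log (𝒢 x) - (γ+1) * Real.log (-Real.log x) with hφdef
  set φd : ℝ → ℝ := fun x => 𝒢' x / 𝒢 x - (γ+1) * (-x⁻¹ / -Real.log x) with hφddef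
  have hφderiv : ∀ x ∈ Ioo (0:ℝ) δ₁, HasDerivAt φ (φd x) x := by
    intro x hx
    obtain ⟨hxm, -⟩ := hδ₁sub hx
    have hx1 : x < 1 := lt_of_lt_of_le hxm.2 (le_trans (min_le_right _ _) (by norm_num))
    have hxc : x ∈ Ioo (0:ℝ) c₀ := ⟨hxm.1, lt_of_lt_of_le hxm.2 (min_le_left _ _)⟩
    have hlogneg : Real.log x < 0 := Real.log_neg hxm.1 hx1
    have h1 : HasDerivAt (fun y => Real.log (𝒢 y)) (𝒢' x / 𝒢 x) x :=
      (hderiv x hxc).log (hpos x hxc).ne'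
    have h2 : HasDerivAt (fun y : ℝ => -Real.log y) (-x⁻¹) x :=
      (Real.hasDerivAt_log hxm.1.ne').neg
    have h3 : HasDerivAt (fun y : ℝ => Real.log (-Real.log y)) (-x⁻¹ / -Real.log x) x :=
      h2.log (neg_ne_zero.2 hlogneg.ne)
    exact h1.sub (h3.const_mul (γ+1))
  -- φd is nonnegative
  have hφd0 : ∀ x ∈ Ioo (0:ℝ) δ₁, 0 ≤ φd x := by
    intro x hx
    obtain ⟨hxm, hr⟩ := hδ₁sub hx
    have hx0 : (0:ℝ) < x := hxm.1
    have hx1 : x < 1 := lt_of_lt_of_le hxm.2 (le_trans (min_le_right _ _) (by norm_num))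
    have hG : 0 < 𝒢 x := hpos x ⟨hx0, lt_of_lt_of_le hxm.2 (min_le_left _ _)⟩
    have hlogneg : Real.log x < 0 := Real.log_neg hx0 hx1
    have hL : 0 < -Real.log x := neg_pos.2 hlogneg
    rw [one_div, Real.log_inv] at hr
    have key : x * -Real.log x * -𝒢' x ≤ (γ+1) * 𝒢 x := by
      have := (div_le_iff₀ hG).1 hr; linarith
    have h2 : -(𝒢' x / 𝒢 x) ≤ (γ+1) / (x * -Real.log x) := by
      rw [← neg_div, div_le_div_iff₀ hG (by positivity)]
      nlinarith
    have h3 : -x⁻¹ / -Real.log x = -(1 / (x * -Real.log x)) := by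
      field_simp
    show 0 ≤ 𝒢' x / 𝒢 x - (γ+1) * (-x⁻¹ / -Real.log x)
    rw [h3]
    have h5 : (γ + 1) * -(1 / (x * -Real.log x)) = -((γ+1) / (x * -Real.log x)) := by ring
    rw [h5]
    linarith
  -- monotonicity of φ up to ρ₀
  set ρ₀ := δ₁ / 2 with hρ₀def
  have hρ₀mem : ρ₀ ∈ Ioo (0:ℝ) δ₁ := ⟨by positivity, by simp [hρ₀def]; linarith⟩
  have hmono : ∀ x ∈ Ioo (0:ℝ) ρ₀, φ x ≤ φ ρ₀ := by
    intro x hx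
    have hsub2 : Icc x ρ₀ ⊆ Ioo (0:ℝ) δ₁ := fun y hy =>
      ⟨lt_of_lt_of_le hx.1 hy.1, lt_of_le_of_lt hy.2 hρ₀mem.2⟩
    obtain ⟨c, hc, hceq⟩ := exists_hasDerivAt_eq_slope φ φd hx.2
      (fun y hy => (hφderiv y (hsub2 hy)).continuousAt.continuousWithinAt)
      (fun y hy => hφderiv y (hsub2 (Ioo_subset_Icc_self hy)))
    have hnn := hφd0 c (hsub2 (Ioo_subset_Icc_self hc))
    rw [hceq] at hnn
    have hd : (0:ℝ) < ρ₀ - x := by linarith [hx.2]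
    have h7 := mul_nonneg hnn hd.le
    rw [div_mul_cancel₀ _ hd.ne'] at h7
    linarith
  -- growth bound
  set C := Real.exp (φ ρ₀) with hCdef
  have hCpos : 0 < C := Real.exp_pos _
  have hsub_c₀ : ∀ x ∈ Ioo (0:ℝ) ρ₀, x ∈ Ioo (0:ℝ) c₀ := fun x hx =>
    ⟨hx.1, lt_of_lt_of_le ((hδ₁sub ⟨hx.1, hx.2.trans hρ₀mem.2⟩).1.2) (min_le_left _ _)⟩
  have hlt1 : ∀ x ∈ Ioo (0:ℝ) ρ₀, x < 1 := fun x hx =>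
    lt_of_lt_of_le ((hδ₁sub ⟨hx.1, hx.2.trans hρ₀mem.2⟩).1.2)
      (le_trans (min_le_right _ _) (by norm_num))
  have hgb : ∀ x ∈ Ioo (0:ℝ) ρ₀, 𝒢 x ≤ C * (-Real.log x) ^ (γ+1 : ℝ) := by
    intro x hx
    have hx0 : (0:ℝ) < x := hx.1
    have hG := hpos x (hsub_c₀ x hx)
    have hL : 0 < -Real.log x := neg_pos.2 (Real.log_neg hx0 (hlt1 x hx))
    have h1 := hmono x hx
    have h2 : Real.log (𝒢 x) ≤ φ ρ₀ + (γ+1) * Real.log (-Real.log x) := by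
      simp only [hφdef] at h1 ⊢; linarith
    calc 𝒢 x = Real.exp (Real.log (𝒢 x)) := (Real.exp_log hG).symm
      _ ≤ Real.exp (φ ρ₀ + (γ+1) * Real.log (-Real.log x)) := Real.exp_le_exp.2 h2
      _ = C * Real.exp ((γ+1) * Real.log (-Real.log x)) := Real.exp_add _ _
      _ = C * (-Real.log x) ^ (γ+1:ℝ) := by
          rw [Real.rpow_def_of_pos hL, mul_comm ((γ:ℝ)+1)]
  -- rpow comparison
  have hlo := (isLittleO_abs_log_rpow_rpow_nhdsGT_zero (γ+1)
    (show (-(1:ℝ)/2) < 0 by norm_num)).def one_pos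
  have htsmall : ∀ᶠ x in 𝓝[>] (0:ℝ), |x * 𝒢' x / 𝒢 x| < 1/2 := by
    have := ht0.eventually (eventually_abs_sub_lt 0 (by norm_num : (0:ℝ) < 1/2))
    simpa using this
  have hE2 : ∀ᶠ x in 𝓝[>] (0:ℝ), x ∈ Ioo (0:ℝ) ρ₀ ∧ 𝒢 x ≤ C * x ^ (-(1:ℝ)/2)
      ∧ |x * 𝒢' x / 𝒢 x| < 1/2 := by
    filter_upwards [Ioo_mem_nhdsGT_of_mem ⟨le_refl (0:ℝ), hρ₀mem.1⟩, hlo, htsmall]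
      with x hx hlox hts
    refine ⟨hx, ?_, hts⟩
    have hx0 : (0:ℝ) < x := hx.1
    have habs : |Real.log x| = -Real.log x :=
      abs_of_neg (Real.log_neg hx0 (hlt1 x hx))
    have hb1 : |Real.log x| ^ (γ+1:ℝ) ≤ x ^ (-(1:ℝ)/2) := by
      have h := hlox
      rw [Real.norm_eq_abs, Real.norm_eq_abs, one_mul,
        abs_of_nonneg (Real.rpow_nonneg (abs_nonneg _) _),
        abs_of_nonneg (Real.rpow_nonneg hx0.le _)] at h
      exact h
    calc 𝒢 x ≤ C * (-Real.log x) ^ (γ+1:ℝ) := hgb x hx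
      _ = C * |Real.log x| ^ (γ+1:ℝ) := by rw [habs]
      _ ≤ C * x ^ (-(1:ℝ)/2) := by
          exact mul_le_mul_of_nonneg_left hb1 hCpos.le
  obtain ⟨δ, hδpos', hδsub⟩ := mem_nhdsGT_iff_exists_Ioo_subset.1 hE2
  rw [mem_Ioi] at hδpos'
  -- x * 𝒢 x → 0
  have hsqrt0 : Tendsto (fun x : ℝ => C * Real.sqrt x) (𝓝[>] (0:ℝ)) (𝓝 0) := by
    have h : Tendsto (fun x : ℝ => C * Real.sqrt x) (𝓝 0) (𝓝 (C * Real.sqrt 0)) :=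
      (continuous_const.mul Real.continuous_sqrt).tendsto 0
    simpa using h.mono_left nhdsWithin_le_nhds
  have hxx : ∀ x : ℝ, 0 < x → Real.sqrt x = x * x ^ (-(1:ℝ)/2) := by
    intro x hx0
    rw [Real.sqrt_eq_rpow, show (1/(2:ℝ)) = 1 + (-(1:ℝ)/2) by norm_num,
      Real.rpow_add hx0, Real.rpow_one]
  have hga : Tendsto (fun x => x * 𝒢 x) (𝓝[>] (0:ℝ)) (𝓝 0) := by
    apply squeeze_zero' ?_ ?_ hsqrt0
    · filter_upwards [hE2] with x hx
      exact (mul_pos hx.1.1 (hpos x (hsub_c₀ x hx.1))).le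
    · filter_upwards [hE2] with x hx
      have hx0 : (0:ℝ) < x := hx.1.1
      calc x * 𝒢 x ≤ x * (C * x ^ (-(1:ℝ)/2)) :=
            mul_le_mul_of_nonneg_left hx.2.1 hx0.le
        _ = C * (x * x ^ (-(1:ℝ)/2)) := by ring
        _ = C * Real.sqrt x := by rw [← hxx x hx0]
  -- integrability
  have hrpowInt : ∀ b : ℝ, IntervalIntegrable (fun x : ℝ => C * x ^ (-(1:ℝ)/2)) volume 0 b :=
    fun b => (intervalIntegrable_rpow' (by norm_num)).const_mul C
  have hInt : ∀ b ∈ Ioo (0:ℝ) δ, IntervalIntegrable 𝒢 volume 0 b := by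
    intro b hb
    rw [intervalIntegrable_iff_integrableOn_Ioc_of_le hb.1.le]
    have hsubδ : Ioc (0:ℝ) b ⊆ Ioo (0:ℝ) δ := fun y hy => ⟨hy.1, lt_of_le_of_lt hy.2 hb.2⟩
    refine MeasureTheory.Integrable.mono
      (g := fun x : ℝ => C * x ^ (-(1:ℝ)/2)) ?_ ?_ ?_
    · exact (intervalIntegrable_iff_integrableOn_Ioc_of_le hb.1.le).1 (hrpowInt b)
    · refine ContinuousOn.aestronglyMeasurable ?_ measurableSet_Ioc
      intro y hy
      exact ((hderiv y (hsub_c₀ y (hδsub (hsubδ hy)).1)).continuousAt).continuousWithinAt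
    · rw [MeasureTheory.ae_restrict_iff' measurableSet_Ioc]
      refine MeasureTheory.ae_of_all _ fun y hy => ?_
      obtain ⟨hyρ, hyb, -⟩ := hδsub (hsubδ hy)
      have hG := hpos y (hsub_c₀ y hyρ)
      rw [Real.norm_eq_abs, Real.norm_eq_abs, abs_of_pos hG,
        abs_of_nonneg (mul_nonneg hCpos.le (Real.rpow_nonneg hyρ.1.le _))]
      exact hyb
  -- integral of the bound
  have hrpow_val : ∀ b : ℝ, 0 < b →
      (∫ x in (0:ℝ)..b, C * x ^ (-(1:ℝ)/2)) = 2 * C * Real.sqrt b := by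
    intro b hb0
    rw [intervalIntegral.integral_const_mul,
      integral_rpow (Or.inl (by norm_num : (-1:ℝ) < -(1:ℝ)/2))]
    rw [show (-(1:ℝ)/2 + 1) = 1/2 by norm_num, Real.zero_rpow (by norm_num : (1:ℝ)/2 ≠ 0),
      Real.sqrt_eq_rpow]
    ring
  -- numerator → 0
  have hsqrt0' : Tendsto (fun b : ℝ => 2 * C * Real.sqrt b) (𝓝[>] (0:ℝ)) (𝓝 0) := by
    have h : Tendsto (fun b : ℝ => 2 * C * Real.sqrt b) (𝓝 0) (𝓝 (2 * C * Real.sqrt 0)) :=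
      (continuous_const.mul Real.continuous_sqrt).tendsto 0
    simpa using h.mono_left nhdsWithin_le_nhds
  have hfa : Tendsto (fun b => ∫ s in (0:ℝ)..b, 𝒢 s) (𝓝[>] (0:ℝ)) (𝓝 0) := by
    apply squeeze_zero' ?_ ?_ hsqrt0'
    · filter_upwards [Ioo_mem_nhdsGT_of_mem ⟨le_refl (0:ℝ), hδpos'⟩] with b hb
      apply intervalIntegral.integral_nonneg_of_ae_restrict hb.1.le
      have h0 : (volume : Measure ℝ).restrict (Icc (0:ℝ) b) = volume.restrict (Ioc 0 b) :=
        (Measure.restrict_congr_set Ioc_ae_eq_Icc).symm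
      rw [h0]
      filter_upwards [ae_restrict_mem measurableSet_Ioc] with y hy
      have hyδ : y ∈ Ioo (0:ℝ) δ := ⟨hy.1, lt_of_le_of_lt hy.2 hb.2⟩
      simpa using (hpos y (hsub_c₀ y (hδsub hyδ).1)).le
    · filter_upwards [Ioo_mem_nhdsGT_of_mem ⟨le_refl (0:ℝ), hδpos'⟩] with b hb
      rw [← hrpow_val b hb.1]
      apply intervalIntegral.integral_mono_ae_restrict hb.1.le (hInt b hb) (hrpowInt b)
      have h0 : (volume : Measure ℝ).restrict (Icc (0:ℝ) b) = volume.restrict (Ioc 0 b) :=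
        (Measure.restrict_congr_set Ioc_ae_eq_Icc).symm
      rw [h0]
      filter_upwards [ae_restrict_mem measurableSet_Ioc] with y hy
      have hyδ : y ∈ Ioo (0:ℝ) δ := ⟨hy.1, lt_of_le_of_lt hy.2 hb.2⟩
      exact (hδsub hyδ).2.1
  -- derivatives for L'Hôpital
  have hcontOn : ContinuousOn 𝒢 (Ioo (0:ℝ) c₀) := fun y hy =>
    ((hderiv y hy).continuousAt).continuousWithinAt
  have hFd : ∀ x ∈ Ioo (0:ℝ) δ, HasDerivAt (fun b => ∫ s in (0:ℝ)..b, 𝒢 s) (𝒢 x) x := by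
    intro x hx
    have hxc := hsub_c₀ x (hδsub hx).1
    exact intervalIntegral.integral_hasDerivAt_right (hInt x hx)
      (hcontOn.stronglyMeasurableAtFilter isOpen_Ioo x hxc)
      (hderiv x hxc).continuousAt
  have hgd : ∀ x ∈ Ioo (0:ℝ) δ, HasDerivAt (fun b => b * 𝒢 b) (𝒢 x + x * 𝒢' x) x := by
    intro x hx
    have hxc := hsub_c₀ x (hδsub hx).1
    have h := (hasDerivAt_id x).mul (hderiv x hxc)
    simpa [Pi.mul_def] using h
  have hgd0 : ∀ x ∈ Ioo (0:ℝ) δ, 𝒢 x + x * 𝒢' x ≠ 0 := by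
    intro x hx
    obtain ⟨hxρ, -, hts⟩ := hδsub hx
    have hG := hpos x (hsub_c₀ x hxρ)
    have h1 : 𝒢 x + x * 𝒢' x = 𝒢 x * (1 + x * 𝒢' x / 𝒢 x) := by field_simp
    rw [h1]
    have habs := abs_lt.1 hts
    exact mul_ne_zero hG.ne' (ne_of_gt (by linarith [habs.1]))
  -- ratio of derivatives → 1
  have hdiv : Tendsto (fun x => 𝒢 x / (𝒢 x + x * 𝒢' x)) (𝓝[>] (0:ℝ)) (𝓝 1) := by
    have h1 : Tendsto (fun x => (1 + x * 𝒢' x / 𝒢 x)⁻¹) (𝓝[>] (0:ℝ)) (𝓝 1) := by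
      have h := (tendsto_const_nhds.add ht0).inv₀
        (by norm_num : (1:ℝ) + 0 ≠ 0)
      simpa using h
    apply h1.congr'
    filter_upwards [Ioo_mem_nhdsGT_of_mem ⟨le_refl (0:ℝ), hδpos'⟩] with x hx
    obtain ⟨hxρ, -, hts⟩ := hδsub hx
    have hG := hpos x (hsub_c₀ x hxρ)
    have habs := abs_lt.1 hts
    have h2 : (1:ℝ) + x * 𝒢' x / 𝒢 x ≠ 0 := ne_of_gt (by linarith [habs.1])
    have h3 : 𝒢 x + x * 𝒢' x = 𝒢 x * (1 + x * 𝒢' x / 𝒢 x) := by field_simp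
    rw [h3, div_mul_cancel_left₀ hG.ne']
  exact HasDerivAt.lhopital_zero_right_on_Ioo hδpos' hFd hgd hgd0 hfa hga hdiv
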